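/- For u ∈ H = ℓ²(ℂ) and v ∈ V = D(A^{1/2}), the sabra shell model bilinear operator satisfies |B(u,v)| ≤ C₁ |u| ‖v‖ with C₁ = |a|(λ^{-1}+λ) + |b|(λ^{-1}+1). -/

import Mathlib

open scoped BigOperators

/-- Wave numbers `kₙ = k₀ λⁿ`. -/
noncomputable def kk (k0 lam : ℝ) (n : ℤ) : ℝ := k0 * lam ^ n

/-- The sabra shell model bilinear operator `B(u,v)ₙ`. -/
noncomputable def sabraB (a b k0 lam : ℝ) (u v : ℤ → ℂ) (n : ℤ) : ℂ :=
  if 1 ≤ n then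
    -Complex.I *
      ((a : ℂ) * (kk k0 lam (n + 1) : ℂ) * v (n + 2) * (starRingEnd ℂ) (u (n + 1))
        + (b : ℂ) * (kk k0 lam n : ℂ) * v (n + 1) * (starRingEnd ℂ) (u (n - 1))
        + (a : ℂ) * (kk k0 lam (n - 1) : ℂ) * u (n - 1) * v (n - 2)
        + (b : ℂ) * (kk k0 lam (n - 1) : ℂ) * v (n - 1) * u (n - 2))
  else 0

lemma my_sq_rpow (g : ℤ → ℝ) :
    (fun i => ‖g i‖ ^ (2 : ENNReal).toReal) = fun i => g i ^ 2 := by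
  funext i
  rw [ENNReal.toReal_ofNat, Real.norm_eq_abs, show ((2:ℝ)) = ((2:ℕ):ℝ) by norm_num,
    Real.rpow_natCast, sq_abs]

lemma my_memlp (g : ℤ → ℝ) (hg : Summable fun n => g n ^ 2) :
    Memℓp g 2 := by
  apply memℓp_gen
  rw [my_sq_rpow]
  exact hg

lemma my_lp_norm (f : lp (fun _ : ℤ => ℝ) 2) :
    ‖f‖ = Real.sqrt (∑' n, ((f : ∀ _ : ℤ, ℝ) n) ^ 2) := by
  have h2 : (0:ℝ) < (2 : ENNReal).toReal := by norm_num
  have h : (∑' i, ‖(f : ∀ _ : ℤ, ℝ) i‖ ^ (2 : ENNReal).toReal)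
      = ∑' n, ((f : ∀ _ : ℤ, ℝ) n) ^ 2 :=
    tsum_congr fun n => congrFun (my_sq_rpow _) n
  rw [lp.norm_eq_tsum_rpow h2, h, ENNReal.toReal_ofNat, Real.sqrt_eq_rpow]

/-- for `u ∈ H`, `v ∈ V`, `|B(u,v)| ≤ C₁ |u| ‖v‖` with
`C₁ = |a|(λ⁻¹+λ) + |b|(λ⁻¹+1)`. -/
theorem sabraB_H_V_bound (a b k0 lam : ℝ) (hk0 : 0 < k0) (hlam : 1 < lam)
    (u v : ℤ → ℂ) (hu0 : ∀ n : ℤ, n ≤ 0 → u n = 0) (hv0 : ∀ n : ℤ, n ≤ 0 → v n = 0)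
    (hu : Summable fun n : ℤ => ‖u n‖ ^ 2)
    (hv : Summable fun n : ℤ => (kk k0 lam n) ^ 2 * ‖v n‖ ^ 2) :
    Summable (fun n : ℤ => ‖sabraB a b k0 lam u v n‖ ^ 2) ∧
      Real.sqrt (∑' n : ℤ, ‖sabraB a b k0 lam u v n‖ ^ 2) ≤
        (|a| * (lam⁻¹ + lam) + |b| * (lam⁻¹ + 1)) *
          Real.sqrt (∑' n : ℤ, ‖u n‖ ^ 2) *
          Real.sqrt (∑' n : ℤ, (kk k0 lam n) ^ 2 * ‖v n‖ ^ 2) := by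
  have hlam0 : (0:ℝ) < lam := lt_trans one_pos hlam
  have hlamne : lam ≠ 0 := ne_of_gt hlam0
  have kkpos : ∀ m : ℤ, 0 < kk k0 lam m := fun m => mul_pos hk0 (zpow_pos hlam0 m)
  set Su := Real.sqrt (∑' n : ℤ, ‖u n‖ ^ 2) with hSu
  set Sv := Real.sqrt (∑' n : ℤ, (kk k0 lam n) ^ 2 * ‖v n‖ ^ 2) with hSv
  have hSu0 : 0 ≤ Su := Real.sqrt_nonneg _
  have hSv0 : 0 ≤ Sv := Real.sqrt_nonneg _
  -- sup bound for weighted v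
  have hsv : ∀ m : ℤ, kk k0 lam m * ‖v m‖ ≤ Sv := by
    intro m
    rw [Real.le_sqrt (mul_nonneg (kkpos m).le (norm_nonneg _)) (tsum_nonneg fun n => by positivity)]
    have := hv.le_tsum m (fun j _ => by positivity)
    calc (kk k0 lam m * ‖v m‖) ^ 2 = (kk k0 lam m)^2 * ‖v m‖^2 := by ring
    _ ≤ _ := this
  -- kk shift
  have hkk : ∀ m : ℤ, kk k0 lam m = lam⁻¹ * kk k0 lam (m + 1) := by
    intro m
    unfold kk
    rw [zpow_add_one₀ hlamne]
    field_simp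
  -- the three bounding sequences
  set c1 : ℝ := |a| * lam⁻¹ * Sv with hc1
  set c2 : ℝ := (|b| * lam⁻¹ + |a| * lam) * Sv with hc2
  set c3 : ℝ := |b| * Sv with hc3
  have hc10 : 0 ≤ c1 := by positivity
  have hc20 : 0 ≤ c2 := by positivity
  have hc30 : 0 ≤ c3 := by positivity
  set G1 : ℤ → ℝ := fun n => c1 * ‖u (n + 1)‖ with hG1
  set G2 : ℤ → ℝ := fun n => c2 * ‖u (n - 1)‖ with hG2
  set G3 : ℤ → ℝ := fun n => c3 * ‖u (n - 2)‖ with hG3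
  -- pointwise bound
  have hpt : ∀ n : ℤ, ‖sabraB a b k0 lam u v n‖ ≤ G1 n + G2 n + G3 n := by
    intro n
    by_cases hn : 1 ≤ n
    · rw [sabraB, if_pos hn]
      set t1 := (a : ℂ) * (kk k0 lam (n + 1) : ℂ) * v (n + 2) * (starRingEnd ℂ) (u (n + 1)) with ht1
      set t2 := (b : ℂ) * (kk k0 lam n : ℂ) * v (n + 1) * (starRingEnd ℂ) (u (n - 1)) with ht2
      set t3 := (a : ℂ) * (kk k0 lam (n - 1) : ℂ) * u (n - 1) * v (n - 2) with ht3
      set t4 := (b : ℂ) * (kk k0 lam (n - 1) : ℂ) * v (n - 1) * u (n - 2) with ht4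
      have e1 : ‖t1‖ = |a| * kk k0 lam (n+1) * ‖v (n+2)‖ * ‖u (n+1)‖ := by
        rw [ht1]; simp [norm_mul, abs_of_pos (kkpos _)]
      have e2 : ‖t2‖ = |b| * kk k0 lam n * ‖v (n+1)‖ * ‖u (n-1)‖ := by
        rw [ht2]; simp [norm_mul, abs_of_pos (kkpos _)]
      have e3 : ‖t3‖ = |a| * kk k0 lam (n-1) * ‖u (n-1)‖ * ‖v (n-2)‖ := by
        rw [ht3]; simp [norm_mul, abs_of_pos (kkpos _)]
      have e4 : ‖t4‖ = |b| * kk k0 lam (n-1) * ‖v (n-1)‖ * ‖u (n-2)‖ := by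
        rw [ht4]; simp [norm_mul, abs_of_pos (kkpos _)]
      have b1 : ‖t1‖ ≤ |a| * lam⁻¹ * Sv * ‖u (n+1)‖ := by
        rw [e1]
        have h := hkk (n+1)
        rw [show n+1+1 = n+2 by ring] at h
        calc |a| * kk k0 lam (n+1) * ‖v (n+2)‖ * ‖u (n+1)‖
            = |a| * lam⁻¹ * (kk k0 lam (n+2) * ‖v (n+2)‖) * ‖u (n+1)‖ := by rw [h]; ring
          _ ≤ |a| * lam⁻¹ * Sv * ‖u (n+1)‖ := by
              gcongr
              exact hsv _
      have b2 : ‖t2‖ ≤ |b| * lam⁻¹ * Sv * ‖u (n-1)‖ := by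
        rw [e2]
        have h := hkk n
        calc |b| * kk k0 lam n * ‖v (n+1)‖ * ‖u (n-1)‖
            = |b| * lam⁻¹ * (kk k0 lam (n+1) * ‖v (n+1)‖) * ‖u (n-1)‖ := by rw [h]; ring
          _ ≤ |b| * lam⁻¹ * Sv * ‖u (n-1)‖ := by
              gcongr
              exact hsv _
      have b3 : ‖t3‖ ≤ |a| * lam * Sv * ‖u (n-1)‖ := by
        rw [e3]
        have h := hkk (n-2)
        rw [show n-2+1 = n-1 by ring] at h
        have h' : kk k0 lam (n-1) = lam * kk k0 lam (n-2) := by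
          rw [h]; field_simp
        calc |a| * kk k0 lam (n-1) * ‖u (n-1)‖ * ‖v (n-2)‖
            = |a| * lam * (kk k0 lam (n-2) * ‖v (n-2)‖) * ‖u (n-1)‖ := by rw [h']; ring
          _ ≤ |a| * lam * Sv * ‖u (n-1)‖ := by
              gcongr
              exact hsv _
      have b4 : ‖t4‖ ≤ |b| * Sv * ‖u (n-2)‖ := by
        rw [e4]
        calc |b| * kk k0 lam (n-1) * ‖v (n-1)‖ * ‖u (n-2)‖
            = |b| * (kk k0 lam (n-1) * ‖v (n-1)‖) * ‖u (n-2)‖ := by ring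
          _ ≤ |b| * Sv * ‖u (n-2)‖ := by
              gcongr
              exact hsv _
      have hnrm : ‖-Complex.I * (t1 + t2 + t3 + t4)‖ ≤ ‖t1‖ + ‖t2‖ + ‖t3‖ + ‖t4‖ := by
        rw [norm_mul]
        simp only [norm_neg, Complex.norm_I, one_mul]
        calc ‖t1 + t2 + t3 + t4‖ ≤ ‖t1 + t2 + t3‖ + ‖t4‖ := norm_add_le _ _
          _ ≤ ‖t1 + t2‖ + ‖t3‖ + ‖t4‖ := by gcongr; exact norm_add_le _ _
          _ ≤ ‖t1‖ + ‖t2‖ + ‖t3‖ + ‖t4‖ := by gcongr; exact norm_add_le _ _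
      have : G1 n + G2 n + G3 n =
          |a| * lam⁻¹ * Sv * ‖u (n+1)‖ + (|b| * lam⁻¹ * Sv * ‖u (n-1)‖
            + |a| * lam * Sv * ‖u (n-1)‖) + |b| * Sv * ‖u (n-2)‖ := by
        rw [hG1, hG2, hG3, hc1, hc2, hc3]; ring
      rw [this]
      linarith [hnrm, b1, b2, b3, b4]
    · rw [sabraB, if_neg hn]
      simp only [norm_zero]
      positivity
  -- summability of the shifted sequences
  have hu1 : Summable (fun n : ℤ => ‖u (n + 1)‖ ^ 2) := by
    have := (Equiv.addRight (1:ℤ)).summable_iff.mpr hu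
    simpa [Function.comp_def] using this
  have hu2 : Summable (fun n : ℤ => ‖u (n - 1)‖ ^ 2) := by
    have := (Equiv.subRight (1:ℤ)).summable_iff.mpr hu
    simpa [Function.comp_def] using this
  have hu3 : Summable (fun n : ℤ => ‖u (n - 2)‖ ^ 2) := by
    have := (Equiv.subRight (2:ℤ)).summable_iff.mpr hu
    simpa [Function.comp_def] using this
  have hG1sq : Summable (fun n : ℤ => G1 n ^ 2) := by
    simp only [hG1, mul_pow]
    exact hu1.mul_left _
  have hG2sq : Summable (fun n : ℤ => G2 n ^ 2) := by
    simp only [hG2, mul_pow]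
    exact hu2.mul_left _
  have hG3sq : Summable (fun n : ℤ => G3 n ^ 2) := by
    simp only [hG3, mul_pow]
    exact hu3.mul_left _
  have hGsum : Summable (fun n : ℤ => 3 * (G1 n ^ 2 + G2 n ^ 2 + G3 n ^ 2)) :=
    (((hG1sq.add hG2sq).add hG3sq).mul_left 3)
  have hG1n : ∀ n, 0 ≤ G1 n := fun n => by rw [hG1]; positivity
  have hG2n : ∀ n, 0 ≤ G2 n := fun n => by rw [hG2]; positivity
  have hG3n : ∀ n, 0 ≤ G3 n := fun n => by rw [hG3]; positivity
  have hsqle : ∀ n : ℤ, (G1 n + G2 n + G3 n) ^ 2 ≤ 3 * (G1 n ^ 2 + G2 n ^ 2 + G3 n ^ 2) := by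
    intro n
    nlinarith [sq_nonneg (G1 n - G2 n), sq_nonneg (G1 n - G3 n), sq_nonneg (G2 n - G3 n)]
  have hBsq : Summable (fun n : ℤ => ‖sabraB a b k0 lam u v n‖ ^ 2) := by
    apply Summable.of_nonneg_of_le (fun n => by positivity) _ hGsum
    intro n
    calc ‖sabraB a b k0 lam u v n‖ ^ 2 ≤ (G1 n + G2 n + G3 n) ^ 2 := by
          apply sq_le_sq' _ (hpt n)
          linarith [norm_nonneg (sabraB a b k0 lam u v n), hpt n]
      _ ≤ _ := hsqle n
  have hGsq : Summable (fun n : ℤ => (G1 n + G2 n + G3 n) ^ 2) :=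
    Summable.of_nonneg_of_le (fun n => by positivity) hsqle hGsum
  refine ⟨hBsq, ?_⟩
  -- lp elements
  have m1 := my_memlp G1 hG1sq
  have m2 := my_memlp G2 hG2sq
  have m3 := my_memlp G3 hG3sq
  set f1 : lp (fun _ : ℤ => ℝ) 2 := ⟨G1, m1⟩ with hf1
  set f2 : lp (fun _ : ℤ => ℝ) 2 := ⟨G2, m2⟩ with hf2
  set f3 : lp (fun _ : ℤ => ℝ) 2 := ⟨G3, m3⟩ with hf3
  have hcoe : ((f1 + f2 + f3 : lp (fun _ : ℤ => ℝ) 2) : ∀ _ : ℤ, ℝ) = fun n => G1 n + G2 n + G3 n := by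
    funext n
    simp [hf1, hf2, hf3, lp.coeFn_add]
    rfl
  have htri : ‖f1 + f2 + f3‖ ≤ ‖f1‖ + ‖f2‖ + ‖f3‖ :=
    (norm_add_le _ _).trans (by gcongr; exact norm_add_le _ _)
  -- norms of the fi
  have shiftedsum : ∀ (e : ℤ ≃ ℤ), (∑' n : ℤ, ‖u (e n)‖ ^ 2) = Su ^ 2 := by
    intro e
    rw [hSu, Real.sq_sqrt (tsum_nonneg fun n => by positivity)]
    exact e.tsum_eq (fun m => ‖u m‖ ^ 2)
  have hnf : ∀ (c : ℝ) (hc : 0 ≤ c) (e : ℤ ≃ ℤ)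
      (f : lp (fun _ : ℤ => ℝ) 2) (hfe : ∀ n, (f : ∀ _ : ℤ, ℝ) n = c * ‖u (e n)‖),
      ‖f‖ = c * Su := by
    intro c hc e f hfe
    rw [my_lp_norm]
    have : (∑' n : ℤ, ((f : ∀ _ : ℤ, ℝ) n) ^ 2) = c ^ 2 * ∑' n : ℤ, ‖u (e n)‖ ^ 2 := by
      rw [← tsum_mul_left]
      exact tsum_congr fun n => by rw [hfe n]; ring
    rw [this, shiftedsum e, Real.sqrt_mul (by positivity), Real.sqrt_sq hc, Real.sqrt_sq hSu0]
  have n1 : ‖f1‖ = c1 * Su := hnf c1 hc10 (Equiv.addRight (1:ℤ)) f1 (fun n => rfl)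
  have n2 : ‖f2‖ = c2 * Su := hnf c2 hc20 (Equiv.subRight (1:ℤ)) f2 (fun n => rfl)
  have n3 : ‖f3‖ = c3 * Su := hnf c3 hc30 (Equiv.subRight (2:ℤ)) f3 (fun n => rfl)
  -- main chain
  calc Real.sqrt (∑' n : ℤ, ‖sabraB a b k0 lam u v n‖ ^ 2)
      ≤ Real.sqrt (∑' n : ℤ, (G1 n + G2 n + G3 n) ^ 2) := by
        apply Real.sqrt_le_sqrt
        apply Summable.tsum_le_tsum _ hBsq hGsq
        intro n
        apply sq_le_sq' _ (hpt n)
        linarith [norm_nonneg (sabraB a b k0 lam u v n), hpt n]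
    _ = ‖f1 + f2 + f3‖ := by
        rw [my_lp_norm, hcoe]
    _ ≤ ‖f1‖ + ‖f2‖ + ‖f3‖ := htri
    _ = (c1 + c2 + c3) * Su := by rw [n1, n2, n3]; ring
    _ = (|a| * (lam⁻¹ + lam) + |b| * (lam⁻¹ + 1)) * Su * Sv := by
        rw [hc1, hc2, hc3]; ring
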